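/- Let G, H₁, H₂ be additive commutative groups, and let η₁ : G →+ H₁ and η₂ : G →+ H₂ be additive group homomorphisms such that the kernel of η₁ is contained in the kernel of η₂. Let M be an n×n matrix with entries in AddMonoidAlgebra (ZMod 2) G, and for i = 1,2 let M(ηᵢ) be the matrix over AddMonoidAlgebra (ZMod 2) Hᵢ obtained by applying the ring homomorphism AddMonoidAlgebra.mapDomainRingHom ηᵢ to each entry of M. If det M(η₁) = 0 then det M(η₂) = 0. -/

import Mathlib

theorem det_map_eq_zero_of_ker_le {G H₁ H₂ : Type*}
    [AddCommGroup G] [AddCommGroup H₁] [AddCommGroup H₂]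
    (η₁ : G →+ H₁) (η₂ : G →+ H₂)
    (hker : ∀ g : G, η₁ g = 0 → η₂ g = 0)
    {n : ℕ} (M : Matrix (Fin n) (Fin n) (AddMonoidAlgebra (ZMod 2) G))
    (h : (M.map (AddMonoidAlgebra.mapDomainRingHom (ZMod 2) η₁)).det = 0) :
    (M.map (AddMonoidAlgebra.mapDomainRingHom (ZMod 2) η₂)).det = 0 := by
  classical
  rw [← RingHom.mapMatrix_apply, ← RingHom.map_det] at h ⊢
  -- define f : H₁ → H₂ with f ∘ η₁ = η₂
  set f : H₁ → H₂ := fun h₁ => if hh : ∃ g, η₁ g = h₁ then η₂ hh.choose else 0 with hf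
  have hcomp : ∀ g : G, f (η₁ g) = η₂ g := by
    intro g
    have hh : ∃ g', η₁ g' = η₁ g := ⟨g, rfl⟩
    simp only [hf, dif_pos hh]
    have h1 : η₁ (hh.choose - g) = 0 := by
      rw [map_sub, hh.choose_spec, sub_self]
    have h2 := hker _ h1
    rw [map_sub, sub_eq_zero] at h2
    exact h2
  have key : ∀ x : AddMonoidAlgebra (ZMod 2) G,
      AddMonoidAlgebra.mapDomainRingHom (ZMod 2) η₂ x
        = AddMonoidAlgebra.mapDomain f (AddMonoidAlgebra.mapDomainRingHom (ZMod 2) η₁ x) := by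
    intro x
    show AddMonoidAlgebra.mapDomain η₂ x = AddMonoidAlgebra.mapDomain f (AddMonoidAlgebra.mapDomain η₁ x)
    apply AddMonoidAlgebra.coeff_injective
    show Finsupp.mapDomain η₂ x.coeff = Finsupp.mapDomain f (Finsupp.mapDomain η₁ x.coeff)
    rw [← Finsupp.mapDomain_comp]
    congr 1
    ext g
    exact (hcomp g).symm
  rw [key, h, AddMonoidAlgebra.mapDomain_zero]
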